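/- For an infinite cardinal κ: 2^ℵ₀ ≤ κ⁺ holds if and only if the set of all transcendental reals is a union of κ-many transcendence bases for ℝ over ℚ. -/

import Mathlib

open Cardinal Set

set_option synthInstance.maxHeartbeats 1000000
set_option maxHeartbeats 2000000

noncomputable section Stmt8Aux

/-- The relative algebraic closure in `ℝ` of the subfield generated by `s`. -/
def myCl (s : Set ℝ) : Set ℝ := {x : ℝ | IsAlgebraic (IntermediateField.adjoin ℚ s) x}

lemma myCl_superset (s : Set ℝ) : s ⊆ myCl s := by
  intro x hx
  have : IsAlgebraic (IntermediateField.adjoin ℚ s)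
      ((algebraMap (IntermediateField.adjoin ℚ s) ℝ)
        ⟨x, IntermediateField.subset_adjoin ℚ s hx⟩) := isAlgebraic_algebraMap _
  simpa [myCl] using this

lemma myCl_mono {s t : Set ℝ} (h : s ⊆ t) : myCl s ⊆ myCl t := fun _ hx =>
  IsAlgebraic.tower_top_of_subalgebra_le
    (show (IntermediateField.adjoin ℚ s).toSubalgebra ≤ (IntermediateField.adjoin ℚ t).toSubalgebra
      from fun y hy => IntermediateField.adjoin.mono ℚ s t h hy) hx

lemma myCl_trans {s t : Set ℝ} (h : t ⊆ myCl s) : myCl t ⊆ myCl s := by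
  intro x hx
  set K := IntermediateField.adjoin ℚ s with hK
  set M : IntermediateField K ℝ := IntermediateField.adjoin K t with hM
  have hMalg : Algebra.IsAlgebraic K M :=
    (IntermediateField.isAlgebraic_adjoin_iff_isAlgebraic K ℝ).2 (fun y hy => h hy)
  have h1 : IsAlgebraic (M.restrictScalars ℚ) x := by
    refine IsAlgebraic.tower_top_of_subalgebra_le
      (show (IntermediateField.adjoin ℚ t).toSubalgebra ≤ (M.restrictScalars ℚ).toSubalgebra
        from fun y hy => ?_) hx
    have hle : IntermediateField.adjoin ℚ t ≤ M.restrictScalars ℚ :=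
      IntermediateField.adjoin_le_iff.2 (fun z hz => IntermediateField.subset_adjoin K t hz)
    exact hle hy
  have h2 : IsAlgebraic M x := h1
  have : Algebra.IsIntegral K M := Algebra.IsAlgebraic.isIntegral
  exact (isIntegral_trans x (isAlgebraic_iff_isIntegral.mp h2)).isAlgebraic

lemma myCl_empty_trans {x : ℝ} (hx : Transcendental ℚ x) : x ∉ myCl ∅ := by
  intro hmem
  have halg : Algebra.IsAlgebraic ℚ (IntermediateField.adjoin ℚ (∅ : Set ℝ)) :=
    (IntermediateField.isAlgebraic_adjoin_iff_isAlgebraic ℚ ℝ).2 (by simp)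
  have : Algebra.IsIntegral ℚ (IntermediateField.adjoin ℚ (∅ : Set ℝ)) :=
    Algebra.IsAlgebraic.isIntegral
  exact hx (isIntegral_trans x (isAlgebraic_iff_isIntegral.mp hmem)).isAlgebraic

lemma myCl_card {κ : Cardinal.{0}} (hκ : ℵ₀ ≤ κ) {s : Set ℝ} (h : #s ≤ κ) :
    #(myCl s) ≤ κ := by
  have h1 : #(myCl s) ≤ max #(IntermediateField.adjoin ℚ s) ℵ₀ :=
    Algebraic.cardinalMk_le_max _ _
  have h2 : #(IntermediateField.adjoin ℚ s) ≤ #ℚ ⊔ #s ⊔ ℵ₀ :=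
    IntermediateField.cardinalMk_adjoin_le ℚ s
  have h3 : #ℚ ⊔ #s ⊔ ℵ₀ ≤ κ := by
    simp only [sup_le_iff]
    exact ⟨⟨Cardinal.mk_le_aleph0.trans hκ, h⟩, hκ⟩
  exact h1.trans (by simp only [sup_le_iff]; exact ⟨h2.trans h3, hκ⟩)


lemma myIndep_insert {u : Set ℝ} (hu : AlgebraicIndependent ℚ ((↑) : u → ℝ)) {a : ℝ}
    (ha : a ∉ myCl u) (ha' : a ∉ u) :
    AlgebraicIndependent ℚ ((↑) : ↥(insert a u : Set ℝ) → ℝ) := by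
  have ht : Transcendental (Algebra.adjoin ℚ (Set.range ((↑) : u → ℝ))) a := by
    rw [Subtype.range_coe]
    intro hAlg
    exact ha (IsAlgebraic.tower_top_of_subalgebra_le
      (IntermediateField.algebra_adjoin_le_adjoin ℚ u) hAlg)
  have h2 := (hu.option_iff_transcendental a).2 ht
  convert h2.comp _ (Set.subtypeInsertEquivOption ha').injective
  ext x
  by_cases h : ↑x = a <;> simp [h, Set.subtypeInsertEquivOption]

/-- chain criterion -/
lemma myIndep_chain {W : Type} [LinearOrder W] (A : W → Set ℝ) (hA : Monotone A)
    (S : Set ℝ) (cc : ℝ → W)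
    (hmem : ∀ x ∈ S, x ∈ myCl (A (cc x)))
    (hnot : ∀ x ∈ S, ∀ w, w < cc x → x ∉ myCl (A w))
    (htr : ∀ x ∈ S, Transcendental ℚ x)
    (hinj : ∀ x ∈ S, ∀ y ∈ S, cc x = cc y → x = y) :
    AlgebraicIndependent ℚ ((↑) : S → ℝ) := by
  apply algebraicIndependent_of_finite
  intro t ht htfin
  -- strong induction on ncard
  suffices H : ∀ (n : ℕ) (t : Set ℝ), t ⊆ S → t.Finite → t.ncard ≤ n →
      AlgebraicIndependent ℚ ((↑) : t → ℝ) from H t.ncard t ht htfin le_rfl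
  intro n
  induction n with
  | zero =>
    intro t ht htfin hcard
    have : t = ∅ := by
      rw [← Set.ncard_eq_zero htfin]; omega
    rw [this]
    exact algebraicIndependent_empty
  | succ n ih =>
    intro t ht htfin hcard
    rcases t.eq_empty_or_nonempty with rfl | hne
    · exact algebraicIndependent_empty
    obtain ⟨a, hat, hamax⟩ := Set.Finite.exists_maximalFor cc t htfin hne
    have hmax' : ∀ b ∈ t, cc b ≤ cc a := by
      intro b hb
      rcases le_total (cc b) (cc a) with h | h
      · exact h
      · exact hamax hb h
    set u := t \ {a} with hu
    have hus : u ⊆ S := fun x hx => ht hx.1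
    have huf : u.Finite := htfin.diff
    have hucard : u.ncard ≤ n := by
      have := Set.ncard_diff_singleton_lt_of_mem hat htfin
      rw [← hu] at this
      omega
    have hui := ih u hus huf hucard
    have hanotu : a ∉ u := by simp [hu]
    have hlt : ∀ b ∈ u, cc b < cc a := by
      intro b hb
      rcases lt_or_eq_of_le (hmax' b hb.1) with h | h
      · exact h
      · exact absurd (hinj b (hus hb) a (ht hat) h) hb.2
    have hanot : a ∉ myCl u := by
      rcases u.eq_empty_or_nonempty with hu0 | hu0
      · rw [hu0]; exact myCl_empty_trans (htr a (ht hat))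
      obtain ⟨b0, hb0, hb0max⟩ := Set.Finite.exists_maximalFor cc u huf hu0
      have hsub : u ⊆ myCl (A (cc b0)) := by
        intro b hb
        have hble : cc b ≤ cc b0 := by
          rcases le_total (cc b) (cc b0) with h | h
          · exact h
          · exact hb0max hb h
        exact myCl_mono (hA hble) (hmem b (hus hb))
      intro hmem'
      exact hnot a (ht hat) (cc b0) (hlt b0 hb0) (myCl_trans hsub hmem')
    have := myIndep_insert hui hanot hanotu
    have heq : insert a u = t := by
      rw [hu, Set.insert_diff_singleton, Set.insert_eq_self.2 hat]
    rwa [heq] at this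

/-- maximal implies basis -/
lemma myBasis_of_maximal {u : Set ℝ}
    (hmax : Maximal (fun x : Set ℝ =>
      AlgebraicIndependent ℚ ((↑) : x → ℝ) ∧ x ⊆ {y : ℝ | Transcendental ℚ y}) u) :
    IsTranscendenceBasis ℚ ((↑) : u → ℝ) := by
  refine ⟨hmax.prop.1, fun s hs hsub => ?_⟩
  rw [Subtype.range_coe] at hsub ⊢
  have hsT : s ⊆ {y : ℝ | Transcendental ℚ y} := by
    intro a ha
    exact hs.transcendental (⟨a, ha⟩ : s)
  exact le_antisymm hsub (hmax.2 ⟨hs, hsT⟩ hsub)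


lemma myLin4 {ι : Type} (f : ι → ℝ) (hf : LinearIndependent ℚ f) (i1 i2 i3 i4 : ι)
    (h12 : i1 ≠ i2) (h13 : i1 ≠ i3) (h14 : i1 ≠ i4) (h23 : i2 ≠ i3) (h24 : i2 ≠ i4)
    (h34 : i3 ≠ i4) (hrel : f i1 - f i2 - f i3 + f i4 = 0) : False := by
  have hv : Function.Injective (![i1, i2, i3, i4] : Fin 4 → ι) := by
    intro i j hij
    fin_cases i <;> fin_cases j <;> simp_all <;> tauto
  have hli := hf.comp _ hv
  rw [Fintype.linearIndependent_iff] at hli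
  have := hli ![1, -1, -1, 1] (by
    simp [Fin.sum_univ_four]
    push_cast
    linarith) 0
  norm_num at this

lemma myTranscSum {ι : Type} (f : ι → ℝ) (hf : AlgebraicIndependent ℚ f) (i j : ι)
    (hij : i ≠ j) : Transcendental ℚ (f i + f j) := by
  have hv : Function.Injective (![i, j] : Fin 2 → ι) := by
    intro a b hab
    fin_cases a <;> fin_cases b <;> simp_all <;> tauto
  have h2 : AlgebraicIndependent ℚ (f ∘ ![i, j]) := hf.comp _ hv
  rw [transcendental_iff]
  intro p hp
  have hinj : Function.Injective (MvPolynomial.aeval (R := ℚ) (f ∘ ![i, j])) :=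
    algebraicIndependent_iff_injective_aeval.mp h2
  set q : MvPolynomial (Fin 2) ℚ :=
    Polynomial.aeval (MvPolynomial.X 0 + MvPolynomial.X 1) p with hq
  have hφq : MvPolynomial.aeval (R := ℚ) (f ∘ ![i, j]) q = 0 := by
    rw [hq, ← Polynomial.aeval_algHom_apply]
    simp only [map_add, MvPolynomial.aeval_X]
    simpa using hp
  have hq0 : q = 0 := by
    apply hinj
    rw [hφq, map_zero]
  have := congrArg (MvPolynomial.aeval (R := ℚ) (![Polynomial.X, 0] : Fin 2 → Polynomial ℚ)) hq0
  rw [hq, ← Polynomial.aeval_algHom_apply, map_zero] at this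
  simpa using this

lemma myPigeon {X Y : Type} (f : X → Y) (ν : Cardinal.{0})
    (h : ∀ y, #{x // f x = y} ≤ ν) : #X ≤ #Y * ν := by
  calc #X = #(Σ y, {x // f x = y}) := (Cardinal.mk_congr (Equiv.sigmaFiberEquiv f)).symm
    _ = Cardinal.sum (fun y => #{x // f x = y}) := Cardinal.mk_sigma _
    _ ≤ Cardinal.sum (fun _ : Y => ν) := Cardinal.sum_le_sum _ _ h
    _ = #Y * ν := Cardinal.sum_const' _ _


theorem forward (κ : Cardinal.{0}) (hκ : ℵ₀ ≤ κ) (h : 𝔠 ≤ Order.succ κ) :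
    ∃ (ι : Type) (S : ι → Set ℝ), #ι ≤ κ ∧
      (∀ i, IsTranscendenceBasis ℚ ((↑) : S i → ℝ)) ∧
      {x : ℝ | Transcendental ℚ x} = ⋃ i, S i := by
  classical
  set T : Set ℝ := {x : ℝ | Transcendental ℚ x} with hT
  set W := (Order.succ κ).ord.ToType with hWdef
  have hWcard : #W = Order.succ κ := Cardinal.mk_ord_toType _
  have hWne : Nonempty W := by
    rw [Ordinal.toType_nonempty_iff_ne_zero]
    intro h0
    have : Order.succ κ = 0 := by
      simpa using congrArg Ordinal.card h0
    have h1 : κ < Order.succ κ := Order.lt_succ κ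
    simp [this] at h1
  -- embedding of T into W
  have hTle : #T ≤ #W := by
    rw [hWcard]
    exact le_trans (Cardinal.mk_subtype_le _) (by rw [Cardinal.mk_real]; exact h)
  obtain ⟨g⟩ : Nonempty (T ↪ W) := (Cardinal.le_def _ _).1 hTle
  -- the filtration
  set A : W → Set ℝ := fun w => {x | ∃ h : x ∈ T, g ⟨x, h⟩ ≤ w} with hA
  have hAmono : Monotone A := fun w w' hww x hx => ⟨hx.1, hx.2.trans hww⟩
  have hAcard : ∀ w, #(A w) ≤ κ := by
    intro w
    have h1 : #(Set.Iio w) ≤ κ := Order.lt_succ_iff.mp (Cardinal.mk_Iio_ord_toType w)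
    have h2 : #(Set.Iic w) ≤ κ := by
      have hsub : Set.Iic w ⊆ insert w (Set.Iio w) := by
        intro x hx
        rcases lt_or_eq_of_le (Set.mem_Iic.1 hx) with h' | h'
        · exact Set.mem_insert_of_mem _ h'
        · rw [h']; exact Set.mem_insert _ _
      refine le_trans (Cardinal.mk_le_mk_of_subset hsub) ?_
      refine le_trans (Cardinal.mk_insert_le) ?_
      have h4 : #(Set.Iio w) + 1 ≤ κ + κ :=
        add_le_add h1 (Cardinal.one_le_aleph0.trans hκ)
      exact h4.trans_eq (Cardinal.add_eq_self hκ)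
    refine le_trans ?_ h2
    refine Cardinal.mk_le_of_injective (f := fun x : A w => (⟨g ⟨x.1, x.2.1⟩, x.2.2⟩ : Set.Iic w)) ?_
    intro x y hxy
    have h5 := g.injective (Subtype.ext_iff.1 hxy)
    have h6 : (x : ℝ) = (y : ℝ) := congrArg (Subtype.val : T → ℝ) h5
    exact Subtype.ext h6
  -- the stage function
  have hstage : ∀ t : T, (t : ℝ) ∈ myCl (A (g t)) := by
    intro t
    exact myCl_superset _ ⟨t.2, le_rfl⟩
  set c : T → W := fun t =>
    (wellFounded_lt (α := W)).min {w : W | (t : ℝ) ∈ myCl (A w)} ⟨g t, hstage t⟩ with hc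
  have hc1 : ∀ t : T, (t : ℝ) ∈ myCl (A (c t)) := by
    intro t
    have : c t ∈ {w : W | (t : ℝ) ∈ myCl (A w)} :=
      (wellFounded_lt (α := W)).min_mem {w : W | (t : ℝ) ∈ myCl (A w)} ⟨g t, hstage t⟩
    exact this
  have hc2 : ∀ (t : T) (w : W), w < c t → (t : ℝ) ∉ myCl (A w) := by
    intro t w hw hmem'
    exact (wellFounded_lt (α := W)).not_lt_min {w : W | (t : ℝ) ∈ myCl (A w)}
      hmem' hw
  -- fibers are small
  have hfib : ∀ w : W, #{t : T // c t = w} ≤ κ := by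
    intro w
    have h3 : #{t : T // c t = w} ≤ #(myCl (A w)) := by
      have hmm : ∀ (t : T), c t = w → (t : ℝ) ∈ myCl (A w) := by
        intro t ht
        rw [← ht]
        exact hc1 t
      refine Cardinal.mk_le_of_injective
        (f := fun t : {t : T // c t = w} =>
          (⟨t.1.1, hmm t.1 t.2⟩ : myCl (A w))) ?_
      intro x y hxy
      have h7 : ((x.1 : ℝ)) = ((y.1 : ℝ)) := congrArg (Subtype.val : myCl (A w) → ℝ) hxy
      exact Subtype.ext (Subtype.ext h7)
    exact h3.trans (myCl_card hκ (hAcard w))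
  -- embeddings of fibers into κ.out
  have hfib' : ∀ w : W, Nonempty ({t : T // c t = w} ↪ κ.out) := by
    intro w
    refine (Cardinal.le_def _ _).1 ?_
    rw [Cardinal.mk_out]
    exact hfib w
  set e : ∀ w : W, {t : T // c t = w} ↪ κ.out := fun w => (hfib' w).some with he
  set e' : T → κ.out := fun t => e (c t) ⟨t, rfl⟩ with he'
  have bridge : ∀ (t : T) (w : W) (hw : c t = w), e' t = e w ⟨t, hw⟩ := by
    intro t w hw
    subst hw
    rfl
  have hinj2 : ∀ t t' : T, e' t = e' t' → c t = c t' → t = t' := by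
    intro t t' he'' hcc
    have h2 : e (c t') ⟨t, hcc⟩ = e (c t') ⟨t', rfl⟩ := (bridge t (c t') hcc).symm.trans he''
    have h3 := (e (c t')).injective h2
    exact congrArg (Subtype.val : {x : T // c x = c t'} → T) h3
  -- extend the stage function to all of ℝ
  set cc : ℝ → W := fun x => if h : x ∈ T then c ⟨x, h⟩ else Classical.arbitrary W with hccdef
  have hccT : ∀ t : T, cc t = c t := by
    intro t
    simp only [hccdef]
    rw [dif_pos t.2]
  set S0 : κ.out → Set ℝ := fun i => (↑) '' {t : T | e' t = i} with hS0
  have hS0T : ∀ i, S0 i ⊆ T := by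
    rintro i x ⟨t, -, rfl⟩
    exact t.2
  have hS0ind : ∀ i, AlgebraicIndependent ℚ ((↑) : S0 i → ℝ) := by
    intro i
    apply myIndep_chain A hAmono (S0 i) cc
    · rintro x ⟨t, -, rfl⟩
      rw [hccT t]
      exact hc1 t
    · rintro x ⟨t, -, rfl⟩ w hw
      rw [hccT t] at hw
      exact hc2 t w hw
    · intro x hx
      exact hS0T i hx
    · rintro x ⟨t, ht, rfl⟩ y ⟨t', ht', rfl⟩ hcx
      rw [hccT t, hccT t'] at hcx
      exact congrArg Subtype.val (hinj2 t t' (ht.trans ht'.symm) hcx)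
  have hext : ∀ i, ∃ u, S0 i ⊆ u ∧ Maximal (fun x : Set ℝ =>
      AlgebraicIndependent ℚ ((↑) : x → ℝ) ∧ x ⊆ T) u :=
    fun i => exists_maximal_algebraicIndependent (S0 i) T (hS0T i) (hS0ind i)
  choose B hB1 hB2 using hext
  refine ⟨κ.out, B, le_of_eq (Cardinal.mk_out κ), fun i => myBasis_of_maximal (hB2 i), ?_⟩
  apply Set.Subset.antisymm
  · intro x hx
    exact Set.mem_iUnion.2 ⟨e' ⟨x, hx⟩, hB1 _ ⟨⟨x, hx⟩, rfl, rfl⟩⟩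
  · intro x hx
    obtain ⟨i, hi⟩ := Set.mem_iUnion.1 hx
    exact (hB2 i).prop.2 hi

theorem backward (κ : Cardinal.{0}) (hκ : ℵ₀ ≤ κ)
    (H : ∃ (ι : Type) (S : ι → Set ℝ), #ι ≤ κ ∧
      (∀ i, IsTranscendenceBasis ℚ ((↑) : S i → ℝ)) ∧
      {x : ℝ | Transcendental ℚ x} = ⋃ i, S i) : 𝔠 ≤ Order.succ κ := by
  classical
  by_contra hcon
  obtain ⟨ι, S, hι, hbasis, hcover⟩ := H
  have hsucc2 : Order.succ (Order.succ κ) ≤ 𝔠 := Order.succ_le_of_lt (lt_of_not_ge hcon)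
  -- a transcendence basis of ℝ over ℚ has cardinality 𝔠
  obtain ⟨s, hs⟩ := exists_isTranscendenceBasis ℚ ℝ
  have htrans : Algebra.Transcendental ℚ ℝ := by
    by_contra htr
    rw [Algebra.transcendental_iff_not_isAlgebraic, not_not] at htr
    have hle2 : #ℝ ≤ max #ℚ ℵ₀ := Algebra.IsAlgebraic.cardinalMk_le_max ℚ ℝ
    rw [Cardinal.mk_real, Cardinal.mk_denumerable, max_self] at hle2
    exact absurd hle2 (not_le.2 Cardinal.aleph0_lt_continuum)
  haveI hsne : Nonempty s := hs.nonempty_iff_transcendental.2 htrans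
  have hscard : #s = 𝔠 := by
    have h0 := hs.lift_cardinalMk_eq_max_lift
    simp only [Cardinal.lift_id] at h0
    rw [Cardinal.mk_real] at h0
    have hq : #ℚ = ℵ₀ := Cardinal.mk_denumerable ℚ
    rw [hq] at h0
    refine le_antisymm (le_trans (Cardinal.mk_subtype_le _) (le_of_eq Cardinal.mk_real)) ?_
    rcases le_total #s ℵ₀ with hle | hle
    · exfalso
      have : 𝔠 ≤ ℵ₀ := h0.le.trans (by simp [hle])
      exact absurd this (not_le.2 Cardinal.aleph0_lt_continuum)
    · calc 𝔠 = ℵ₀ ⊔ #s ⊔ ℵ₀ := h0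
        _ ≤ #s := by simp [hle]
  -- big jointly independent family
  set A := (Order.succ κ).out with hA
  set G := (Order.succ (Order.succ κ)).out with hG
  have hAcard : #A = Order.succ κ := Cardinal.mk_out _
  have hGcard : #G = Order.succ (Order.succ κ) := Cardinal.mk_out _
  have hsum : #(A ⊕ G) ≤ #s := by
    rw [Cardinal.mk_sum]
    simp only [Cardinal.lift_id]
    rw [hAcard, hGcard, hscard]
    have h1 : Order.succ κ + Order.succ (Order.succ κ) ≤
        Order.succ (Order.succ κ) + Order.succ (Order.succ κ) := by
      gcongr
      exact Order.le_succ _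
    refine le_trans h1 ?_
    rw [Cardinal.add_eq_self (hκ.trans ((Order.le_succ κ).trans (Order.le_succ _)))]
    exact hsucc2
  obtain ⟨emb⟩ : Nonempty ((A ⊕ G) ↪ s) := (Cardinal.le_def _ _).1 hsum
  set f : A ⊕ G → ℝ := fun p => ((emb p : s) : ℝ) with hf
  have hfind : AlgebraicIndependent ℚ f := hs.1.comp emb emb.injective
  have hflin : LinearIndependent ℚ f := hfind.linearIndependent
  have hfinj : Function.Injective f := hfind.injective
  set z : A → G → ℝ := fun a g => f (Sum.inl a) + f (Sum.inr g) with hz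
  have hztr : ∀ a g, Transcendental ℚ (z a g) := fun a g =>
    myTranscSum f hfind _ _ (by simp)
  have hzinj : ∀ a a' g g', z a g = z a' g' → a = a' ∧ g = g' := by
    intro a a' g g' hzz
    simp only [hz] at hzz
    by_cases haa : a = a'
    · subst haa
      refine ⟨rfl, ?_⟩
      have h1 : f (Sum.inr g) = f (Sum.inr g') := by linarith
      exact Sum.inr.inj (hfinj h1)
    · by_cases hgg : g = g'
      · subst hgg
        exfalso
        have h1 : f (Sum.inl a) = f (Sum.inl a') := by linarith
        exact haa (Sum.inl.inj (hfinj h1))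
      · exfalso
        refine myLin4 f hflin (Sum.inl a) (Sum.inl a') (Sum.inr g') (Sum.inr g)
          (by simp [haa]) (by simp) (by simp) (by simp) (by simp)
          (by simp [Ne.symm hgg]) (by linarith)
  -- the coloring
  have hcc : ∀ a g, ∃ i, z a g ∈ S i := by
    intro a g
    have : z a g ∈ {x : ℝ | Transcendental ℚ x} := hztr a g
    rw [hcover] at this
    exact Set.mem_iUnion.1 this
  choose col hcol using hcc
  -- four points in one basis give a contradiction
  have hfour : ∀ (i : ι) (a a' : A) (g g' : G), a ≠ a' → g ≠ g' →
      col a g = i → col a' g = i → col a g' = i → col a' g' = i → False := by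
    intro i a a' g g' haa hgg h1 h2 h3 h4
    have hBlin : LinearIndependent ℚ ((↑) : S i → ℝ) := (hbasis i).1.linearIndependent
    have hne1 : z a g ≠ z a g' := fun hEq => hgg (hzinj a a g g' hEq).2
    have hne2 : z a g ≠ z a' g := fun hEq => haa (hzinj a a' g g hEq).1
    have hne3 : z a g ≠ z a' g' := fun hEq => haa (hzinj a a' g g' hEq).1
    have hne4 : z a g' ≠ z a' g := fun hEq => haa (hzinj a a' g' g hEq).1
    have hne5 : z a g' ≠ z a' g' := fun hEq => haa (hzinj a a' g' g' hEq).1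
    have hne6 : z a' g ≠ z a' g' := fun hEq => hgg (hzinj a' a' g g' hEq).2
    refine myLin4 ((↑) : S i → ℝ) hBlin
      ⟨z a g, h1 ▸ hcol a g⟩ ⟨z a g', h3 ▸ hcol a g'⟩
      ⟨z a' g, h2 ▸ hcol a' g⟩ ⟨z a' g', h4 ▸ hcol a' g'⟩
      (fun hEq => hne1 (congrArg Subtype.val hEq))
      (fun hEq => hne2 (congrArg Subtype.val hEq))
      (fun hEq => hne3 (congrArg Subtype.val hEq))
      (fun hEq => hne4 (congrArg Subtype.val hEq))
      (fun hEq => hne5 (congrArg Subtype.val hEq))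
      (fun hEq => hne6 (congrArg Subtype.val hEq)) ?_
    show z a g - z a g' - z a' g + z a' g' = 0
    simp only [hz]
    ring
  -- pigeonhole 1
  have hpair : ∀ g : G, ∃ (i : ι) (a a' : A), a ≠ a' ∧ col a g = i ∧ col a' g = i := by
    intro g
    by_contra hno
    push_neg at hno
    have hb : ∀ i, #{a : A // col a g = i} ≤ 1 := by
      intro i
      rw [Cardinal.le_one_iff_subsingleton]
      constructor
      intro x y
      apply Subtype.ext
      by_contra hvne
      exact (hno i x.1 y.1 hvne x.2) y.2
    have hP := myPigeon (fun a : A => col a g) 1 hb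
    rw [mul_one, hAcard] at hP
    exact absurd (hP.trans hι) (not_le.2 (Order.lt_succ κ))
  choose pi pa pa' hpne hp1 hp2 using hpair
  -- pigeonhole 2
  have hbig : ∃ i₀ : ι, ¬ #{g : G // pi g = i₀} ≤ Order.succ κ := by
    by_contra hno
    push_neg at hno
    have hP := myPigeon pi (Order.succ κ) (fun i => hno i)
    rw [hGcard] at hP
    have h2 : #ι * Order.succ κ ≤ Order.succ κ := by
      calc #ι * Order.succ κ ≤ Order.succ κ * Order.succ κ :=
            mul_le_mul' (hι.trans (Order.le_succ κ)) le_rfl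
        _ = Order.succ κ := Cardinal.mul_eq_self (hκ.trans (Order.le_succ κ))
    exact absurd (hP.trans h2) (not_le.2 (Order.lt_succ _))
  obtain ⟨i₀, hi₀⟩ := hbig
  apply hi₀
  have hF2 : Function.Injective
      (fun g : {g : G // pi g = i₀} => ((pa g.1, pa' g.1) : A × A)) := by
    intro g g' hEq
    rw [Prod.ext_iff] at hEq
    obtain ⟨h1, h2⟩ := hEq
    by_contra hne'
    have hgg : g.1 ≠ g'.1 := fun h => hne' (Subtype.ext h)
    refine hfour i₀ (pa g.1) (pa' g.1) g.1 g'.1 (hpne g.1) hgg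
      ((hp1 g.1).trans g.2) ((hp2 g.1).trans g.2) ?_ ?_
    · rw [show pa g.1 = pa g'.1 from h1]
      exact (hp1 g'.1).trans g'.2
    · rw [show pa' g.1 = pa' g'.1 from h2]
      exact (hp2 g'.1).trans g'.2
  have hle : #{g : G // pi g = i₀} ≤ #(A × A) := Cardinal.mk_le_of_injective hF2
  rw [Cardinal.mk_prod] at hle
  simp only [Cardinal.lift_id] at hle
  rw [hAcard, Cardinal.mul_eq_self (hκ.trans (Order.le_succ κ))] at hle
  exact hle

end Stmt8Aux

open Cardinal

theorem stmt8 (κ : Cardinal.{0}) (hκ : ℵ₀ ≤ κ) :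
    𝔠 ≤ Order.succ κ ↔
      ∃ (ι : Type) (S : ι → Set ℝ), #ι ≤ κ ∧
        (∀ i, IsTranscendenceBasis ℚ ((↑) : S i → ℝ)) ∧
        {x : ℝ | Transcendental ℚ x} = ⋃ i, S i :=
  ⟨forward κ hκ, backward κ hκ⟩
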